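/- Let k ≥ 1 be an integer, let 0 < a < b, and let U ⊆ ℝ² be an open set containing the closed upper half-annulus {x = (x₁,x₂) ∈ ℝ² : a < |x| < b, x₂ ≥ 0}. Suppose u : ℝ² → ℝ is twice continuously differentiable on U, harmonic on U (i.e. ∂²u/∂x₁² + ∂²u/∂x₂² = 0 on U), and satisfies u(x₁,0) = 0 whenever a < |x₁| < b. Then the function ξ(r) := ∫_0^π u(r cos t, r sin t)·sin(kt) dt satisfies the ordinary differential equation ξ''(r) + ξ'(r)/r − k²·ξ(r)/r² = 0 for all r ∈ (a,b). -/

import Mathlib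

open Set MeasureTheory intervalIntegral Real

lemma tube_mem {W : Set (ℝ×ℝ)} (hW : IsOpen W) {r₀ : ℝ}
    (hK : ∀ t ∈ Icc (0:ℝ) π, ((r₀,t) : ℝ×ℝ) ∈ W) :
    ∃ δ > 0, ∀ ρ t : ℝ, |ρ - r₀| < δ → t ∈ Icc (0:ℝ) π → ((ρ,t) : ℝ×ℝ) ∈ W := by
  have hKc : IsCompact ({r₀} ×ˢ Icc (0:ℝ) π) := isCompact_singleton.prod isCompact_Icc
  obtain ⟨δ, hδ, hsub⟩ := hKc.exists_thickening_subset_open hW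
    (by rintro ⟨x, t⟩ ⟨hx, ht⟩; simp only [mem_singleton_iff] at hx; subst hx; exact hK t ht)
  refine ⟨δ, hδ, fun ρ t hρ ht => hsub ?_⟩
  rw [Metric.mem_thickening_iff]
  refine ⟨(r₀, t), ⟨rfl, ht⟩, ?_⟩
  rw [Prod.dist_eq]
  simp [Real.dist_eq, hρ, hδ, max_lt_iff, abs_nonneg, hρ]

lemma hasDerivAt_param_integral
    {W : Set (ℝ×ℝ)} (hW : IsOpen W) {F F' : ℝ×ℝ → ℝ}
    (hF : ContinuousOn F W) (hF' : ContinuousOn F' W)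
    (hd : ∀ q ∈ W, HasDerivAt (fun ρ => F (ρ, q.2)) (F' q) q.1)
    {w : ℝ → ℝ} (hw : Continuous w) (hw1 : ∀ t, |w t| ≤ 1)
    {r₀ : ℝ} (hK : ∀ t ∈ Icc (0:ℝ) π, ((r₀,t) : ℝ×ℝ) ∈ W) :
    HasDerivAt (fun ρ => ∫ t in (0:ℝ)..π, F (ρ, t) * w t)
      (∫ t in (0:ℝ)..π, F' (r₀, t) * w t) r₀ := by
  obtain ⟨δ, hδ, htube⟩ := tube_mem hW hK
  have hδ2 : 0 < δ/2 := by linarith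
  -- the compact tube
  set K : Set (ℝ×ℝ) := Metric.closedBall r₀ (δ/2) ×ˢ Icc (0:ℝ) π with hKdef
  have hKW : K ⊆ W := by
    rintro ⟨ρ, t⟩ ⟨hρ, ht⟩
    exact htube ρ t (lt_of_le_of_lt (by simpa [Real.dist_eq] using hρ) (by linarith)) ht
  have hKc : IsCompact K := (isCompact_closedBall _ _).prod isCompact_Icc
  obtain ⟨C, hC⟩ := hKc.exists_bound_of_continuousOn (hF'.mono hKW)
  -- small facts about sections
  have hsect : ∀ ρ ∈ Metric.ball r₀ (δ/2), ContinuousOn (fun t => F (ρ, t) * w t) (Icc (0:ℝ) π) := by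
    intro ρ hρ
    refine ContinuousOn.mul ?_ hw.continuousOn
    refine (hF.comp (by fun_prop) ?_)
    intro t ht
    exact htube ρ t (lt_of_lt_of_le (by simpa [Real.dist_eq] using hρ) (by linarith)) ht
  have h0δ : r₀ ∈ Metric.ball r₀ (δ/2) := Metric.mem_ball_self hδ2
  have huIoc : uIoc (0:ℝ) π ⊆ Icc (0:ℝ) π := by
    rw [uIoc_of_le Real.pi_pos.le]; exact Ioc_subset_Icc_self
  refine (intervalIntegral.hasDerivAt_integral_of_dominated_loc_of_deriv_le
      (F := fun ρ t => F (ρ, t) * w t) (F' := fun ρ t => F' (ρ, t) * w t) (x₀ := r₀)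
      (bound := fun _ => C) (a := (0:ℝ)) (b := π) (μ := volume) (Metric.ball_mem_nhds r₀ hδ2)
      ?_ ?_ ?_ ?_ ?_ ?_).2
  · filter_upwards [Metric.ball_mem_nhds r₀ hδ2] with ρ hρ
    exact ((hsect ρ hρ).mono huIoc).aestronglyMeasurable measurableSet_uIoc
  · exact ((hsect r₀ h0δ).mono (by rw [uIcc_of_le Real.pi_pos.le]))
      |>.intervalIntegrable
  · refine ContinuousOn.aestronglyMeasurable ?_ measurableSet_uIoc
    refine ContinuousOn.mono ?_ huIoc
    refine ContinuousOn.mul ?_ hw.continuousOn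
    refine (hF'.comp (by fun_prop) ?_)
    intro t ht
    exact htube r₀ t (by simpa using hδ) ht
  · refine ae_of_all _ (fun t ht ρ hρ => ?_)
    have hmem : ((ρ, t) : ℝ×ℝ) ∈ K := by
      refine ⟨?_, huIoc ht⟩
      simpa [Real.dist_eq] using (Metric.mem_ball.1 hρ).le
    calc ‖F' (ρ, t) * w t‖ = ‖F' (ρ, t)‖ * |w t| := by rw [norm_mul]; rfl
    _ ≤ C * 1 := mul_le_mul (hC _ hmem) (hw1 t) (abs_nonneg _)
        (le_trans (norm_nonneg _) (hC _ hmem))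
    _ = C := mul_one C
  · exact intervalIntegrable_const
  · refine ae_of_all _ (fun t ht ρ hρ => ?_)
    have hmem : ((ρ, t) : ℝ×ℝ) ∈ W :=
      htube ρ t (by simpa [Real.dist_eq] using lt_of_lt_of_le (Metric.mem_ball.1 hρ) (by linarith)) (huIoc ht)
    exact (hd (ρ, t) hmem).mul_const (w t)
theorem fourier_coeff_ode (k : ℕ) (hk : 1 ≤ k) (a b : ℝ) (ha : 0 < a) (hab : a < b)
    (U : Set (ℝ × ℝ)) (hU : IsOpen U)
    (hsub : {x : ℝ × ℝ |
        a < Real.sqrt (x.1 ^ 2 + x.2 ^ 2) ∧ Real.sqrt (x.1 ^ 2 + x.2 ^ 2) < b ∧ 0 ≤ x.2} ⊆ U)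
    (u : ℝ × ℝ → ℝ) (hreg : ContDiffOn ℝ 2 u U)
    (hharm : ∀ x ∈ U,
      fderiv ℝ (fun y : ℝ × ℝ => fderiv ℝ u y (1, 0)) x (1, 0)
        + fderiv ℝ (fun y : ℝ × ℝ => fderiv ℝ u y (0, 1)) x (0, 1) = 0)
    (hbd : ∀ x₁ : ℝ, a < |x₁| → |x₁| < b → u (x₁, 0) = 0)
    (ξ : ℝ → ℝ)
    (hξ : ∀ r : ℝ,
      ξ r = ∫ t in (0:ℝ)..Real.pi,
        u (r * Real.cos t, r * Real.sin t) * Real.sin ((k : ℝ) * t)) :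
    ∀ r : ℝ, a < r → r < b →
      deriv (deriv ξ) r + deriv ξ r / r - (k : ℝ) ^ 2 * ξ r / r ^ 2 = 0 := by
  have hπ := Real.pi_pos
  set P : ℝ×ℝ → ℝ×ℝ := fun q => (q.1 * Real.cos q.2, q.1 * Real.sin q.2) with hPdef
  have hPc : Continuous P := by fun_prop
  set V : Set (ℝ×ℝ) := P ⁻¹' U with hVdef
  have hV : IsOpen V := hU.preimage hPc
  have hmem : ∀ ρ t : ℝ, a < ρ → ρ < b → t ∈ Icc (0:ℝ) π → ((ρ,t) : ℝ×ℝ) ∈ V := by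
    intro ρ t h1 h2 ht
    have hρ : 0 < ρ := lt_trans ha h1
    refine hsub ⟨?_, ?_, ?_⟩
    · show a < Real.sqrt ((ρ * Real.cos t)^2 + (ρ * Real.sin t)^2)
      have : (ρ * Real.cos t)^2 + (ρ * Real.sin t)^2 = ρ^2 := by
        have := Real.sin_sq_add_cos_sq t; nlinarith
      rw [this, Real.sqrt_sq hρ.le]; exact h1
    · show Real.sqrt ((ρ * Real.cos t)^2 + (ρ * Real.sin t)^2) < b
      have : (ρ * Real.cos t)^2 + (ρ * Real.sin t)^2 = ρ^2 := by
        have := Real.sin_sq_add_cos_sq t; nlinarith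
      rw [this, Real.sqrt_sq hρ.le]; exact h2
    · exact mul_nonneg hρ.le (Real.sin_nonneg_of_nonneg_of_le_pi ht.1 ht.2)
  -- regularity facts for u
  have hu1 : ∀ x ∈ U, HasFDerivAt u (fderiv ℝ u x) x := by
    intro x hx
    exact ((hreg.differentiableOn (by norm_num) x hx).differentiableAt
      (hU.mem_nhds hx)).hasFDerivAt
  have hdu : ContDiffOn ℝ 1 (fderiv ℝ u) U := hreg.fderiv_of_isOpen hU (by norm_num)
  have hdu_cont : ContinuousOn (fderiv ℝ u) U := hdu.continuousOn
  have hu2 : ∀ x ∈ U, HasFDerivAt (fderiv ℝ u) (fderiv ℝ (fderiv ℝ u) x) x := by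
    intro x hx
    exact ((hdu.differentiableOn (by norm_num) x hx).differentiableAt
      (hU.mem_nhds hx)).hasFDerivAt
  have hddu_cont : ContinuousOn (fderiv ℝ (fderiv ℝ u)) U :=
    (hdu.fderiv_of_isOpen (m := 0) hU (by norm_num)).continuousOn
  -- harmonicity in terms of the second fderiv
  have hharmB : ∀ x ∈ U,
      fderiv ℝ (fderiv ℝ u) x (1,0) (1,0) + fderiv ℝ (fderiv ℝ u) x (0,1) (0,1) = 0 := by
    intro x hx
    have happ : ∀ w : ℝ×ℝ, fderiv ℝ (fun y : ℝ×ℝ => fderiv ℝ u y w) x =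
        (fderiv ℝ (fderiv ℝ u) x).flip w := by
      intro w
      have hD : DifferentiableAt ℝ (fderiv ℝ u) x := (hu2 x hx).differentiableAt
      rw [show (fun y : ℝ×ℝ => fderiv ℝ u y w) = (fun y : ℝ×ℝ => (fderiv ℝ u y) ((fun _ => w) y)) from rfl,
        fderiv_clm_apply hD (differentiableAt_const w)]
      simp
    have := hharm x hx
    rw [happ (1,0), happ (0,1)] at this
    simpa using this
  -- curve derivatives
  have curveR : ∀ (t ρ : ℝ), HasDerivAt (fun s : ℝ => P (s, t))
      ((Real.cos t, Real.sin t) : ℝ×ℝ) ρ := by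
    intro t ρ
    have h1 : HasDerivAt (fun s : ℝ => s * Real.cos t) (Real.cos t) ρ := by
      simpa using (hasDerivAt_id ρ).mul_const (Real.cos t)
    have h2 : HasDerivAt (fun s : ℝ => s * Real.sin t) (Real.sin t) ρ := by
      simpa using (hasDerivAt_id ρ).mul_const (Real.sin t)
    exact h1.prodMk h2
  have curveT : ∀ (ρ t : ℝ), HasDerivAt (fun τ : ℝ => P (ρ, τ))
      ((-(ρ * Real.sin t), ρ * Real.cos t) : ℝ×ℝ) t := by
    intro ρ t
    have h1 : HasDerivAt (fun τ : ℝ => ρ * Real.cos τ) (-(ρ * Real.sin t)) t := by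
      simpa [mul_neg] using (Real.hasDerivAt_cos t).const_mul ρ
    have h2 : HasDerivAt (fun τ : ℝ => ρ * Real.sin τ) (ρ * Real.cos t) t := by
      simpa using (Real.hasDerivAt_sin t).const_mul ρ
    exact h1.prodMk h2
  -- the polar functions and their partial derivatives
  set g : ℝ×ℝ → ℝ := fun q => u (P q) with hgdef
  set g1 : ℝ×ℝ → ℝ := fun q =>
    fderiv ℝ u (P q) (Real.cos q.2, Real.sin q.2) with hg1def
  set g11 : ℝ×ℝ → ℝ := fun q =>
    fderiv ℝ (fderiv ℝ u) (P q) (Real.cos q.2, Real.sin q.2)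
      (Real.cos q.2, Real.sin q.2) with hg11def
  set g2 : ℝ×ℝ → ℝ := fun q =>
    fderiv ℝ u (P q) (-(q.1 * Real.sin q.2), q.1 * Real.cos q.2) with hg2def
  set g22 : ℝ×ℝ → ℝ := fun q =>
    fderiv ℝ (fderiv ℝ u) (P q) (-(q.1 * Real.sin q.2), q.1 * Real.cos q.2)
        (-(q.1 * Real.sin q.2), q.1 * Real.cos q.2)
      - fderiv ℝ u (P q) (q.1 * Real.cos q.2, q.1 * Real.sin q.2) with hg22def
  have hg_r : ∀ q ∈ V, HasDerivAt (fun ρ => g (ρ, q.2)) (g1 q) q.1 := by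
    intro q hq
    exact (hu1 (P q) hq).comp_hasDerivAt q.1 (curveR q.2 q.1)
  have hg1_r : ∀ q ∈ V, HasDerivAt (fun ρ => g1 (ρ, q.2)) (g11 q) q.1 := by
    intro q hq
    have hA := (hu2 (P q) hq).comp_hasDerivAt q.1 (curveR q.2 q.1)
    simpa using hA.clm_apply (hasDerivAt_const q.1 ((Real.cos q.2, Real.sin q.2) : ℝ×ℝ))
  have hg_t : ∀ q ∈ V, HasDerivAt (fun τ => g (q.1, τ)) (g2 q) q.2 := by
    intro q hq
    exact (hu1 (P q) hq).comp_hasDerivAt q.2 (curveT q.1 q.2)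
  have hg2_t : ∀ q ∈ V, HasDerivAt (fun τ => g2 (q.1, τ)) (g22 q) q.2 := by
    intro q hq
    have hA := (hu2 (P q) hq).comp_hasDerivAt q.2 (curveT q.1 q.2)
    have hv : HasDerivAt (fun τ : ℝ => ((-(q.1 * Real.sin τ), q.1 * Real.cos τ) : ℝ×ℝ))
        ((-(q.1 * Real.cos q.2), -(q.1 * Real.sin q.2)) : ℝ×ℝ) q.2 := by
      have h1 : HasDerivAt (fun τ : ℝ => -(q.1 * Real.sin τ)) (-(q.1 * Real.cos q.2)) q.2 :=
        (by simpa using (Real.hasDerivAt_sin q.2).const_mul q.1 :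
          HasDerivAt (fun τ : ℝ => q.1 * Real.sin τ) (q.1 * Real.cos q.2) q.2).neg
      have h2 : HasDerivAt (fun τ : ℝ => q.1 * Real.cos τ) (-(q.1 * Real.sin q.2)) q.2 := by
        simpa [mul_neg] using (Real.hasDerivAt_cos q.2).const_mul q.1
      exact h1.prodMk h2
    have := hA.clm_apply hv
    have hneg : ((-(q.1 * Real.cos q.2), -(q.1 * Real.sin q.2)) : ℝ×ℝ)
        = -((q.1 * Real.cos q.2, q.1 * Real.sin q.2) : ℝ×ℝ) := rfl
    have heq : g22 q =
        fderiv ℝ (fderiv ℝ u) (P q) (-(q.1 * Real.sin q.2), q.1 * Real.cos q.2)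
          (-(q.1 * Real.sin q.2), q.1 * Real.cos q.2)
        + fderiv ℝ u (P q) ((-(q.1 * Real.cos q.2), -(q.1 * Real.sin q.2)) : ℝ×ℝ) := by
      rw [hneg, map_neg]; ring
    rw [heq]; exact this
  -- continuity of the polar partial derivatives
  have hPV : ∀ q ∈ V, P q ∈ U := fun q hq => hq
  have hgc : ContinuousOn g V := hreg.continuousOn.comp hPc.continuousOn hPV
  have hvec : Continuous (fun q : ℝ×ℝ => ((Real.cos q.2, Real.sin q.2) : ℝ×ℝ)) := by fun_prop
  have hvec2 : Continuous (fun q : ℝ×ℝ =>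
      ((-(q.1 * Real.sin q.2), q.1 * Real.cos q.2) : ℝ×ℝ)) := by fun_prop
  have hvec3 : Continuous (fun q : ℝ×ℝ =>
      ((q.1 * Real.cos q.2, q.1 * Real.sin q.2) : ℝ×ℝ)) := by fun_prop
  have hLg : ContinuousOn (fun q => fderiv ℝ u (P q)) V :=
    hdu_cont.comp hPc.continuousOn hPV
  have hBg : ContinuousOn (fun q => fderiv ℝ (fderiv ℝ u) (P q)) V :=
    hddu_cont.comp hPc.continuousOn hPV
  have hg1c : ContinuousOn g1 V := hLg.clm_apply hvec.continuousOn
  have hg11c : ContinuousOn g11 V :=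
    (hBg.clm_apply hvec.continuousOn).clm_apply hvec.continuousOn
  have hg2c : ContinuousOn g2 V := hLg.clm_apply hvec2.continuousOn
  have hg22c : ContinuousOn g22 V :=
    ((hBg.clm_apply hvec2.continuousOn).clm_apply hvec2.continuousOn).sub
      (hLg.clm_apply hvec3.continuousOn)
  -- the PDE in polar coordinates
  have hPDE : ∀ q ∈ V, q.1 ≠ 0 → g11 q = -(g22 q) / q.1^2 - g1 q / q.1 := by
    intro q hq hr0
    have hb := hharmB (P q) hq
    set c := Real.cos q.2 with hc
    set s := Real.sin q.2 with hs
    set B := fderiv ℝ (fderiv ℝ u) (P q) with hB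
    set L := fderiv ℝ u (P q) with hL
    have hcs2 : c^2 + s^2 = 1 := by
      rw [hc, hs]; have := Real.sin_sq_add_cos_sq q.2; linarith
    have e1 : ((c, s) : ℝ×ℝ) = c • ((1:ℝ), (0:ℝ)) + s • ((0:ℝ), (1:ℝ)) := by
      simp [Prod.ext_iff]
    have e2 : ((-(q.1 * s), q.1 * c) : ℝ×ℝ)
        = (-(q.1 * s)) • ((1:ℝ), (0:ℝ)) + (q.1 * c) • ((0:ℝ), (1:ℝ)) := by
      rw [Prod.smul_mk, Prod.smul_mk, Prod.mk_add_mk]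
      simp
    have e3 : ((q.1 * c, q.1 * s) : ℝ×ℝ)
        = (q.1 * c) • ((1:ℝ), (0:ℝ)) + (q.1 * s) • ((0:ℝ), (1:ℝ)) := by
      simp [Prod.ext_iff]
    have hg11q : g11 q = c^2 * B (1,0) (1,0) + c*s*B (1,0) (0,1)
        + s*c*B (0,1) (1,0) + s^2*B (0,1) (0,1) := by
      show B (c, s) (c, s) = _
      rw [e1]
      simp only [map_add, _root_.map_smul, ContinuousLinearMap.add_apply,
        ContinuousLinearMap.smul_apply, smul_eq_mul]
      ring
    have hg1q : g1 q = c * L (1,0) + s * L (0,1) := by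
      show L (c, s) = _
      rw [e1]
      simp only [map_add, _root_.map_smul, smul_eq_mul]
    have hg22q : g22 q = (q.1*s)^2 * B (1,0) (1,0) - q.1^2*s*c*B (1,0) (0,1)
        - q.1^2*c*s*B (0,1) (1,0) + (q.1*c)^2 * B (0,1) (0,1)
        - (q.1*c*L (1,0) + q.1*s*L (0,1)) := by
      show B (-(q.1*s), q.1*c) (-(q.1*s), q.1*c) - L (q.1*c, q.1*s) = _
      rw [e2, e3]
      simp only [map_add, _root_.map_smul, map_neg, ContinuousLinearMap.add_apply,
        ContinuousLinearMap.smul_apply, ContinuousLinearMap.neg_apply, smul_eq_mul]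
      ring
    have key : q.1^2 * g11 q + g22 q + q.1 * g1 q = 0 := by
      rw [hg11q, hg1q, hg22q]
      linear_combination q.1^2 * hb
        + q.1^2 * (B (1,0) (1,0) + B (0,1) (0,1)) * hcs2
    have h2 : q.1^2 ≠ 0 := pow_ne_zero 2 hr0
    have key2 : g11 q = (-(g22 q) - q.1 * g1 q) / q.1^2 := by
      rw [eq_div_iff h2]; linear_combination key
    rw [key2, sub_div, neg_div, pow_two, mul_div_mul_left _ _ hr0]
  -- the weight function
  set w : ℝ → ℝ := fun t => Real.sin ((k:ℝ) * t) with hwdef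
  have hwc : Continuous w := by fun_prop
  have hw1 : ∀ t, |w t| ≤ 1 := fun t => Real.abs_sin_le_one _
  have hξeq : ξ = fun ρ => ∫ t in (0:ℝ)..π, g (ρ, t) * w t := by
    funext ρ; exact hξ ρ
  have hKmem : ∀ ρ, a < ρ → ρ < b → ∀ t ∈ Icc (0:ℝ) π, ((ρ,t) : ℝ×ℝ) ∈ V :=
    fun ρ h1 h2 t ht => hmem ρ t h1 h2 ht
  -- differentiation under the integral sign, twice
  have D1 : ∀ ρ, a < ρ → ρ < b →
      HasDerivAt ξ (∫ t in (0:ℝ)..π, g1 (ρ, t) * w t) ρ := by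
    intro ρ h1 h2
    rw [hξeq]
    exact hasDerivAt_param_integral hV hgc hg1c hg_r hwc hw1 (hKmem ρ h1 h2)
  set η : ℝ → ℝ := fun ρ => ∫ t in (0:ℝ)..π, g1 (ρ, t) * w t with hηdef
  have D2 : ∀ ρ, a < ρ → ρ < b →
      HasDerivAt η (∫ t in (0:ℝ)..π, g11 (ρ, t) * w t) ρ := fun ρ h1 h2 =>
    hasDerivAt_param_integral hV hg1c hg11c hg1_r hwc hw1 (hKmem ρ h1 h2)
  intro r har hbr
  have hrpos : 0 < r := lt_trans ha har
  have hr0 : r ≠ 0 := hrpos.ne'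
  have hrV : ∀ t ∈ Icc (0:ℝ) π, ((r,t) : ℝ×ℝ) ∈ V := hKmem r har hbr
  have hd1 : deriv ξ r = η r := (D1 r har hbr).deriv
  have hdd : deriv (deriv ξ) r = ∫ t in (0:ℝ)..π, g11 (r, t) * w t := by
    have hev : deriv ξ =ᶠ[nhds r] η := by
      filter_upwards [Ioo_mem_nhds har hbr] with ρ hρ
      exact (D1 ρ hρ.1 hρ.2).deriv
    rw [hev.deriv_eq]
    exact (D2 r har hbr).deriv
  -- integration by parts (twice) in the angular variable
  have huIcc : uIcc (0:ℝ) π = Icc 0 π := uIcc_of_le hπ.le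
  have hrVIcc : ∀ t ∈ uIcc (0:ℝ) π, ((r,t) : ℝ×ℝ) ∈ V := by rw [huIcc]; exact hrV
  have hsec : ∀ {f : ℝ×ℝ → ℝ}, ContinuousOn f V →
      ContinuousOn (fun t => f (r,t)) (uIcc (0:ℝ) π) := by
    intro f hf
    exact hf.comp (by fun_prop) (fun t ht => hrVIcc t ht)
  have hInt_g : IntervalIntegrable (fun t => g (r, t)) volume 0 π :=
    (hsec hgc).intervalIntegrable
  have hInt_g2 : IntervalIntegrable (fun t => g2 (r, t)) volume 0 π :=
    (hsec hg2c).intervalIntegrable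
  have hInt_g22w : IntervalIntegrable (fun t => g22 (r, t) * w t) volume 0 π :=
    ((hsec hg22c).mul hwc.continuousOn).intervalIntegrable
  have hInt_g1w : IntervalIntegrable (fun t => g1 (r, t) * w t) volume 0 π :=
    ((hsec hg1c).mul hwc.continuousOn).intervalIntegrable
  have hw_d : ∀ t ∈ uIcc (0:ℝ) π, HasDerivAt w (Real.cos ((k:ℝ)*t) * k) t := by
    intro t _
    have := (Real.hasDerivAt_sin ((k:ℝ)*t)).comp t ((hasDerivAt_id t).const_mul (k:ℝ))
    simp only [mul_one] at this
    exact this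
  have hw'_d : ∀ t ∈ uIcc (0:ℝ) π,
      HasDerivAt (fun t => Real.cos ((k:ℝ)*t) * k) (-(Real.sin ((k:ℝ)*t)) * k * k) t := by
    intro t _
    have := ((Real.hasDerivAt_cos ((k:ℝ)*t)).comp t
      ((hasDerivAt_id t).const_mul (k:ℝ))).mul_const (k:ℝ)
    refine this.congr_deriv ?_
    ring
  have hw_int : IntervalIntegrable (fun t => Real.cos ((k:ℝ)*t) * k) volume 0 π :=
    (by fun_prop : Continuous (fun t => Real.cos ((k:ℝ)*t) * k)).intervalIntegrable _ _
  have hw'_int : IntervalIntegrable (fun t => -(Real.sin ((k:ℝ)*t)) * k * k) volume 0 π :=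
    (by fun_prop : Continuous (fun t => -(Real.sin ((k:ℝ)*t)) * k * k)).intervalIntegrable _ _
  -- boundary values
  have hg0 : g (r, 0) = 0 := by
    have h0 : u (r, 0) = 0 := hbd r
      (by rw [abs_of_pos hrpos]; exact har) (by rw [abs_of_pos hrpos]; exact hbr)
    show u (r * Real.cos 0, r * Real.sin 0) = 0
    rw [Real.cos_zero, Real.sin_zero, mul_one, mul_zero]; exact h0
  have hgπ : g (r, π) = 0 := by
    have h0 : u (-r, 0) = 0 := hbd (-r)
      (by rw [abs_neg, abs_of_pos hrpos]; exact har)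
      (by rw [abs_neg, abs_of_pos hrpos]; exact hbr)
    show u (r * Real.cos π, r * Real.sin π) = 0
    rw [Real.cos_pi, Real.sin_pi, mul_neg_one, mul_zero]; exact h0
  have hw0 : w 0 = 0 := by simp [hwdef]
  have hwπ : w π = 0 := by
    show Real.sin ((k:ℝ) * π) = 0
    exact Real.sin_nat_mul_pi k
  have hInt_g22 : IntervalIntegrable (fun t => g22 (r,t)) volume 0 π :=
    (hsec hg22c).intervalIntegrable
  have IBP1 := intervalIntegral.integral_mul_deriv_eq_deriv_mul
    (u := w) (u' := fun t => Real.cos ((k:ℝ)*t) * k)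
    (v := fun t => g2 (r, t)) (v' := fun t => g22 (r, t))
    hw_d (fun t ht => hg2_t (r,t) (hrVIcc t ht)) hw_int hInt_g22
  have IBP2 := intervalIntegral.integral_mul_deriv_eq_deriv_mul
    (u := fun t => Real.cos ((k:ℝ)*t) * k) (u' := fun t => -(Real.sin ((k:ℝ)*t)) * k * k)
    (v := fun t => g (r, t)) (v' := fun t => g2 (r, t))
    hw'_d (fun t ht => hg_t (r,t) (hrVIcc t ht)) hw'_int hInt_g2
  have E2 : (∫ t in (0:ℝ)..π, (Real.cos ((k:ℝ)*t) * k) * g2 (r,t)) = (k:ℝ)^2 * ξ r := by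
    rw [IBP2]
    simp only [hgπ, hg0, hξeq, mul_zero, sub_zero, zero_sub]
    rw [← intervalIntegral.integral_const_mul, ← intervalIntegral.integral_neg]
    apply intervalIntegral.integral_congr
    intro t ht
    simp only [hwdef]
    ring
  have E1 : (∫ t in (0:ℝ)..π, g22 (r,t) * w t) = -((k:ℝ)^2 * ξ r) := by
    have comm : (∫ t in (0:ℝ)..π, g22 (r,t) * w t)
        = ∫ t in (0:ℝ)..π, w t * g22 (r,t) :=
      intervalIntegral.integral_congr (fun t _ => mul_comm _ _)
    rw [comm, IBP1]
    simp only [hw0, hwπ, zero_mul, sub_zero, zero_sub]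
    rw [E2]
  -- assemble everything
  have hcongr : (∫ t in (0:ℝ)..π, g11 (r,t) * w t)
      = ∫ t in (0:ℝ)..π,
          ((-(1/r^2)) * (g22 (r,t) * w t) + (-(1/r)) * (g1 (r,t) * w t)) := by
    apply intervalIntegral.integral_congr
    intro t ht
    show g11 (r,t) * w t
      = (-(1/r^2)) * (g22 (r,t) * w t) + (-(1/r)) * (g1 (r,t) * w t)
    have hq : g11 (r,t) = -(g22 (r,t)) / r^2 - g1 (r,t) / r :=
      hPDE (r,t) (hrVIcc t ht) hr0
    rw [hq]
    field_simp
    ring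
  have hsplit : (∫ t in (0:ℝ)..π,
        ((-(1/r^2)) * (g22 (r,t) * w t) + (-(1/r)) * (g1 (r,t) * w t)))
      = (-(1/r^2)) * (∫ t in (0:ℝ)..π, g22 (r,t) * w t)
        + (-(1/r)) * (∫ t in (0:ℝ)..π, g1 (r,t) * w t) := by
    rw [intervalIntegral.integral_add (hInt_g22w.const_mul _) (hInt_g1w.const_mul _),
      intervalIntegral.integral_const_mul, intervalIntegral.integral_const_mul]
  have hηr : η r = ∫ t in (0:ℝ)..π, g1 (r,t) * w t := rfl
  rw [hdd, hd1, hcongr, hsplit, E1, hηr]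
  field_simp
  ring
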